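/- (Existence of a similarity realizing a distance-proportional correspondence) Let n ≥ 1, let ι be any index set, let w, w' : ι → ℝⁿ, and let λ > 0 satisfy dist(w'(i), w'(j)) = λ·dist(w(i), w(j)) for all i, j. Then there exists a bijection F : ℝⁿ → ℝⁿ with dist(F x, F y) = λ·dist(x, y) for all x, y ∈ ℝⁿ, such that F(w(i)) = w'(i) for all i. -/

import Mathlib

open Finsupp in
/-- If two families have equal pairwise inner products, the corresponding linear
combinations have equal norms. -/
lemma norm_linearCombination_eq {E : Type*} [NormedAddCommGroup E]
    [InnerProductSpace ℝ E] {ι : Type*} (v u : ι → E)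
    (hvu : ∀ i j, inner ℝ (v i) (v j) = (inner ℝ (u i) (u j) : ℝ)) (f : ι →₀ ℝ) :
    ‖Finsupp.linearCombination ℝ v f‖ = ‖Finsupp.linearCombination ℝ u f‖ := by
  have key : (inner ℝ (Finsupp.linearCombination ℝ v f) (Finsupp.linearCombination ℝ v f) : ℝ)
      = inner ℝ (Finsupp.linearCombination ℝ u f) (Finsupp.linearCombination ℝ u f) := by
    rw [Finsupp.linearCombination_apply, Finsupp.linearCombination_apply, Finsupp.sum,
      Finsupp.sum, sum_inner, sum_inner]
    refine Finset.sum_congr rfl fun i _ => ?_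
    rw [inner_sum, inner_sum]
    refine Finset.sum_congr rfl fun j _ => ?_
    rw [real_inner_smul_left, real_inner_smul_left, real_inner_smul_right,
      real_inner_smul_right, hvu]
  rw [real_inner_self_eq_norm_sq, real_inner_self_eq_norm_sq] at key
  nlinarith [norm_nonneg (Finsupp.linearCombination ℝ v f),
    norm_nonneg (Finsupp.linearCombination ℝ u f)]

/-- Any correspondence `w i ↦ w' i` that scales all mutual distances by a fixed ratio
`λ > 0` extends to a bijective similarity of `ℝⁿ`. -/
theorem exists_similarity_extending {n : ℕ} (hn : 1 ≤ n) {ι : Type*}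
    (w w' : ι → EuclideanSpace ℝ (Fin n)) (lam : ℝ) (hlam : 0 < lam)
    (h : ∀ i j, dist (w' i) (w' j) = lam * dist (w i) (w j)) :
    ∃ F : EuclideanSpace ℝ (Fin n) → EuclideanSpace ℝ (Fin n),
      Function.Bijective F ∧ (∀ x y, dist (F x) (F y) = lam * dist x y) ∧
      ∀ i, F (w i) = w' i := by
  have hlam0 : lam ≠ 0 := ne_of_gt hlam
  by_cases hι : Nonempty ι
  swap
  · -- trivial case: no constraints
    refine ⟨fun x => lam • x, ?_, ?_, fun i => absurd ⟨i⟩ hι⟩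
    · constructor
      · intro a b hab
        simpa [hlam0] using smul_right_injective (EuclideanSpace ℝ (Fin n)) hlam0 hab
      · intro z
        exact ⟨lam⁻¹ • z, by simp [smul_smul, mul_inv_cancel₀ hlam0]⟩
    · intro x y
      rw [dist_eq_norm, dist_eq_norm, ← smul_sub, norm_smul]
      simp [abs_of_pos hlam]
  obtain ⟨i₀⟩ := hι
  set v : ι → EuclideanSpace ℝ (Fin n) := fun i => w i - w i₀ with hv
  set u : ι → EuclideanSpace ℝ (Fin n) := fun i => lam⁻¹ • (w' i - w' i₀) with hu
  -- distances between the `u`'s equal distances between the `v`'s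
  have hdist : ∀ i j, ‖u i - u j‖ = ‖v i - v j‖ := by
    intro i j
    have : u i - u j = lam⁻¹ • (w' i - w' j) := by
      rw [hu]; simp only [← smul_sub]; congr 1; abel
    rw [this, norm_smul]
    have h2 : ‖w' i - w' j‖ = lam * ‖w i - w j‖ := by
      rw [← dist_eq_norm, ← dist_eq_norm]; exact h i j
    rw [h2, hv]
    simp only [Real.norm_eq_abs, abs_of_pos (inv_pos.mpr hlam)]
    rw [← mul_assoc, inv_mul_cancel₀ hlam0, one_mul]
    congr 1; abel
  have hu0 : u i₀ = 0 := by simp [hu]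
  have hv0 : v i₀ = 0 := by simp [hv]
  have hnorm : ∀ i, ‖u i‖ = ‖v i‖ := by
    intro i
    have := hdist i i₀
    rwa [hu0, hv0, sub_zero, sub_zero] at this
  have hinner : ∀ i j, inner ℝ (v i) (v j) = (inner ℝ (u i) (u j) : ℝ) := by
    intro i j
    have h1 : ‖u i - u j‖ ^ 2 = ‖v i - v j‖ ^ 2 := by rw [hdist i j]
    have h2 : ‖u i‖ ^ 2 = ‖v i‖ ^ 2 := by rw [hnorm i]
    have h3 : ‖u j‖ ^ 2 = ‖v j‖ ^ 2 := by rw [hnorm j]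
    have e1 : ‖u i - u j‖ ^ 2 = ‖u i‖ ^ 2 - 2 * inner ℝ (u i) (u j) + ‖u j‖ ^ 2 :=
      norm_sub_sq_real (u i) (u j)
    have e2 : ‖v i - v j‖ ^ 2 = ‖v i‖ ^ 2 - 2 * inner ℝ (v i) (v j) + ‖v j‖ ^ 2 :=
      norm_sub_sq_real (v i) (v j)
    linarith
  -- build a linear isometry on the span of the `v`'s sending `v i` to `u i`
  set φ : (ι →₀ ℝ) →ₗ[ℝ] EuclideanSpace ℝ (Fin n) := Finsupp.linearCombination ℝ v
  set ψ : (ι →₀ ℝ) →ₗ[ℝ] EuclideanSpace ℝ (Fin n) := Finsupp.linearCombination ℝ u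
  have hnormeq : ∀ f, ‖φ f‖ = ‖ψ f‖ := fun f => norm_linearCombination_eq v u hinner f
  have hker : LinearMap.ker φ ≤ LinearMap.ker ψ := by
    intro f hf
    rw [LinearMap.mem_ker] at hf ⊢
    have := hnormeq f
    rw [hf, norm_zero] at this
    exact norm_eq_zero.mp this.symm
  set S := LinearMap.range φ
  set e : ((ι →₀ ℝ) ⧸ LinearMap.ker φ) ≃ₗ[ℝ] S := LinearMap.quotKerEquivRange φ
  set T : S →ₗ[ℝ] EuclideanSpace ℝ (Fin n) :=
    ((LinearMap.ker φ).liftQ ψ hker).comp e.symm.toLinearMap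
  have hT : ∀ f : ι →₀ ℝ, T ⟨φ f, LinearMap.mem_range_self φ f⟩ = ψ f := by
    intro f
    have he : e (Submodule.Quotient.mk f) = ⟨φ f, LinearMap.mem_range_self φ f⟩ :=
      Subtype.ext (LinearMap.quotKerEquivRange_apply_mk φ f)
    simp only [T, LinearMap.comp_apply, ← he, LinearEquiv.coe_coe, LinearEquiv.coe_toLinearMap,
      LinearEquiv.symm_apply_apply]
    exact Submodule.liftQ_apply _ _ _
  have hTnorm : ∀ x : S, ‖T x‖ = ‖x‖ := by
    rintro ⟨x, hx⟩
    obtain ⟨f, rfl⟩ := hx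
    rw [hT f]
    exact (hnormeq f).symm
  set L : S →ₗᵢ[ℝ] EuclideanSpace ℝ (Fin n) := ⟨T, hTnorm⟩
  set G := L.extend
  have hGv : ∀ i, G (v i) = u i := by
    intro i
    have hmem : v i ∈ S := by
      refine ⟨Finsupp.single i 1, ?_⟩
      simp [φ, Finsupp.linearCombination_single]
    have : G (v i) = L ⟨v i, hmem⟩ := L.extend_apply ⟨v i, hmem⟩
    rw [this]
    have hvphi : (⟨v i, hmem⟩ : S) = ⟨φ (Finsupp.single i 1),
        LinearMap.mem_range_self φ _⟩ := by
      ext; simp [φ, Finsupp.linearCombination_single]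
    show T _ = u i
    rw [hvphi, hT]
    simp [ψ, Finsupp.linearCombination_single]
  -- define the similarity
  refine ⟨fun x => w' i₀ + lam • G (x - w i₀), ?_, ?_, ?_⟩
  · have hGsurj : Function.Surjective G := by
      have := G.injective
      exact (LinearMap.injective_iff_surjective (f := G.toLinearMap)).mp this
    constructor
    · intro a b hab
      have : lam • G (a - w i₀) = lam • G (b - w i₀) := by
        exact add_left_cancel hab
      have h2 : G (a - w i₀) = G (b - w i₀) := smul_right_injective (EuclideanSpace ℝ (Fin n)) hlam0 this
      have h3 : a - w i₀ = b - w i₀ := G.injective h2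
      exact sub_left_injective h3
    · intro z
      obtain ⟨y, hy⟩ := hGsurj (lam⁻¹ • (z - w' i₀))
      refine ⟨y + w i₀, ?_⟩
      simp only [add_sub_cancel_right, hy, smul_smul, mul_inv_cancel₀ hlam0, one_smul]
      abel
  · intro x y
    simp only [dist_eq_norm, add_sub_add_left_eq_sub, ← smul_sub, ← G.map_sub, norm_smul,
      G.norm_map, Real.norm_eq_abs, abs_of_pos hlam]
    congr 2
    abel
  · intro i
    have : w i - w i₀ = v i := rfl
    simp only [this, hGv i, hu, smul_smul, mul_inv_cancel₀ hlam0, one_smul]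
    abel
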